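/- Let H ∈ (0,1/2) and let L : (0,1] → (0,∞) be such that, writing γ_t = t^{2H} L(t)² and ν_t = t^{H−1/2} L(t), one has γ_t → 0, ν_t → ∞, γ_t log ν_t → 0 and γ_t log t → 0 as t → 0⁺. Let Φ denote the standard Gaussian cumulative distribution function and, for k ∈ ℝ and v > 0, let C_BS(k,v) = Φ(−k/v + v/2) − e^k Φ(−k/v − v/2) be the Black–Scholes call price with unit spot and total volatility v. Fix x > 0 and Λ_x ∈ (0,∞), let t₀ ∈ (0,1], and let c : (0,t₀) → (0,1) satisfy lim_{t→0⁺} γ_t log c(t) = −Λ_x. If σ̂ : (0,t₀) → (0,∞) satisfies C_BS(x/ν_t, σ̂(t)√t) = c(t) for every t ∈ (0,t₀), then σ̂(t) → x/√(2Λ_x) as t → 0⁺. -/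

import Mathlib

open Real Filter Set MeasureTheory Topology

/-- The standard Gaussian cumulative distribution function. -/
noncomputable def stdNormalCDF (x : ℝ) : ℝ :=
  ∫ y in Set.Iic x, Real.exp (-(y ^ 2) / 2) / Real.sqrt (2 * Real.pi)

/-- Black–Scholes call price with unit spot, log-moneyness `k` and total volatility `v`. -/
noncomputable def CBS (k v : ℝ) : ℝ :=
  stdNormalCDF (-(k / v) + v / 2) - Real.exp k * stdNormalCDF (-(k / v) - v / 2)

noncomputable def gpdf (x : ℝ) : ℝ := Real.exp (-(x ^ 2) / 2) / Real.sqrt (2 * Real.pi)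

lemma gpdf_eq (x : ℝ) : gpdf x = Real.exp (-(1/2) * x ^ 2) / Real.sqrt (2 * Real.pi) := by
  unfold gpdf; ring_nf

lemma gpdf_pos (x : ℝ) : 0 < gpdf x :=
  div_pos (Real.exp_pos _) (Real.sqrt_pos.2 (by positivity))

lemma gpdf_cont : Continuous gpdf := by
  unfold gpdf; fun_prop

lemma gpdf_integrable : Integrable gpdf := by
  have h := (integrable_exp_neg_mul_sq (by norm_num : (0:ℝ) < 1/2)).div_const (Real.sqrt (2 * Real.pi))
  exact h.congr (Filter.Eventually.of_forall fun y => (gpdf_eq y).symm)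

lemma gpdf_total : ∫ x : ℝ, gpdf x = 1 := by
  have h : ∫ x : ℝ, Real.exp (-(1/2) * x ^ 2) = Real.sqrt (π / (1/2)) := integral_gaussian (1/2)
  have h2 : ∫ x : ℝ, gpdf x = (∫ x : ℝ, Real.exp (-(1/2) * x ^ 2)) / Real.sqrt (2 * Real.pi) := by
    simp_rw [gpdf_eq]
    exact integral_div _ _
  rw [h2, h, show π / (1/2) = 2 * π by ring]
  exact div_self (by positivity)

lemma gpdf_integrableOn (s : Set ℝ) : IntegrableOn gpdf s := gpdf_integrable.integrableOn

/-- translation for Iic integrals -/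
lemma integral_Iic_comp_add (f : ℝ → ℝ) (b c : ℝ) :
    ∫ y in Set.Iic b, f y = ∫ y in Set.Iic (b - c), f (y + c) := by
  have h1 : ∫ y in Set.Iic b, f y = ∫ y, (Set.Iic b).indicator f y :=
    (integral_indicator measurableSet_Iic).symm
  have h2 : ∫ y in Set.Iic (b - c), f (y + c) = ∫ y, (Set.Iic (b-c)).indicator (fun z => f (z + c)) y :=
    (integral_indicator measurableSet_Iic).symm
  rw [h1, h2, ← MeasureTheory.integral_add_right_eq_self ((Set.Iic b).indicator f) c]
  congr 1
  ext y
  by_cases hy : y ≤ b - c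
  · rw [Set.indicator_of_mem (by simp only [Set.mem_Iic]; linarith : y + c ∈ Set.Iic b),
      Set.indicator_of_mem (by simpa using hy)]
  · rw [Set.indicator_of_notMem (by simp only [Set.mem_Iic]; intro h; exact hy (by linarith)),
      Set.indicator_of_notMem (by simpa using hy)]

lemma stdNormalCDF_eq (w : ℝ) : stdNormalCDF w = ∫ y in Set.Iic w, gpdf y := rfl

lemma stdNormalCDF_nonneg (w : ℝ) : 0 ≤ stdNormalCDF w :=
  setIntegral_nonneg measurableSet_Iic (fun y _ => (gpdf_pos y).le)

lemma stdNormalCDF_le_one (w : ℝ) : stdNormalCDF w ≤ 1 := by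
  rw [stdNormalCDF_eq, ← gpdf_total]
  exact setIntegral_le_integral gpdf_integrable (by filter_upwards with y using (gpdf_pos y).le)

lemma stdNormalCDF_le_exp (w : ℝ) (hw : w ≤ 0) : stdNormalCDF w ≤ Real.exp (-(w^2)/2) := by
  rw [stdNormalCDF_eq, integral_Iic_comp_add gpdf w w]
  simp only [sub_self]
  calc ∫ y in Set.Iic (0:ℝ), gpdf (y + w)
      ≤ ∫ y in Set.Iic (0:ℝ), Real.exp (-(w^2)/2) * gpdf y := by
        refine setIntegral_mono_on ((gpdf_integrable.comp_add_right w).integrableOn)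
          ((gpdf_integrable.const_mul _).integrableOn) measurableSet_Iic ?_
        intro y hy
        simp only [Set.mem_Iic] at hy
        unfold gpdf
        rw [← mul_div_assoc, ← Real.exp_add]
        gcongr
        nlinarith [mul_nonneg (neg_nonneg.2 hy) (neg_nonneg.2 hw)]
    _ = Real.exp (-(w^2)/2) * stdNormalCDF 0 := by
        rw [stdNormalCDF_eq]; exact integral_const_mul _ _
    _ ≤ Real.exp (-(w^2)/2) := by
        nlinarith [stdNormalCDF_le_one 0, Real.exp_pos (-(w^2)/2), stdNormalCDF_nonneg 0]

lemma stdNormalCDF_hasDerivAt (w : ℝ) : HasDerivAt stdNormalCDF (gpdf w) w := by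
  have key : ∀ u : ℝ, stdNormalCDF u = stdNormalCDF 0 + ∫ y in (0:ℝ)..u, gpdf y := by
    intro u
    rw [stdNormalCDF_eq, stdNormalCDF_eq,
      ← intervalIntegral.integral_Iic_sub_Iic (gpdf_integrableOn _) (gpdf_integrableOn _)]
    ring
  have hderiv : HasDerivAt (fun u => stdNormalCDF 0 + ∫ y in (0:ℝ)..u, gpdf y) (gpdf w) w := by
    refine HasDerivAt.const_add _ ?_
    exact intervalIntegral.integral_hasDerivAt_right
      (gpdf_integrable.intervalIntegrable)
      (gpdf_cont.stronglyMeasurableAtFilter _ _)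
      gpdf_cont.continuousAt
  exact hderiv.congr_deriv rfl |>.congr_of_eventuallyEq (Filter.Eventually.of_forall key) |>.congr_deriv rfl

/-- Key density identity -/
lemma gpdf_ident (k v : ℝ) (hv : v ≠ 0) :
    Real.exp k * gpdf (-(k / v) - v / 2) = gpdf (-(k / v) + v / 2) := by
  unfold gpdf
  rw [← mul_div_assoc, ← Real.exp_add]
  congr 1
  field_simp
  ring

/-- CBS is nonnegative. -/
lemma CBS_nonneg (k v : ℝ) (hv : 0 < v) : 0 ≤ CBS k v := by
  unfold CBS
  rw [sub_nonneg]
  set d2 := -(k / v) - v / 2 with hd2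
  have hd1 : -(k / v) + v / 2 = d2 + v := by rw [hd2]; ring
  rw [hd1, stdNormalCDF_eq, stdNormalCDF_eq, integral_Iic_comp_add gpdf (d2 + v) v,
    add_sub_cancel_right, ← integral_const_mul]
  refine setIntegral_mono_on ((gpdf_integrable.const_mul _).integrableOn)
    ((gpdf_integrable.comp_add_right v).integrableOn) measurableSet_Iic ?_
  intro y hy
  simp only [Set.mem_Iic] at hy
  unfold gpdf
  rw [← mul_div_assoc, ← Real.exp_add]
  gcongr
  have : y * v ≤ d2 * v := by exact mul_le_mul_of_nonneg_right hy hv.le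
  rw [hd2] at this
  have h2 : y * v ≤ -k - v^2/2 := by
    have : (-(k / v) - v / 2) * v = -k - v^2/2 := by field_simp
    linarith [this ▸ ‹y * v ≤ (-(k / v) - v / 2) * v›]
  nlinarith

/-- The vega formula. -/
lemma CBS_hasDerivAt (k : ℝ) {v : ℝ} (hv : 0 < v) :
    HasDerivAt (fun u => CBS k u) (gpdf (-(k / v) + v / 2)) v := by
  have hinv : HasDerivAt (fun u : ℝ => u⁻¹) (-((v:ℝ) ^ 2)⁻¹) v := hasDerivAt_inv hv.ne'
  have hd1 : HasDerivAt (fun u : ℝ => -(k / u) + u / 2) (k / v ^ 2 + 1 / 2) v := by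
    have h2 : HasDerivAt (fun u : ℝ => -(k * u⁻¹) + u / 2) (-(k * -((v:ℝ)^2)⁻¹) + 1/2) v :=
      ((hinv.const_mul k).neg).add ((hasDerivAt_id v).div_const 2)
    have he : -(k * -((v:ℝ)^2)⁻¹) + 1/2 = k / v ^ 2 + 1 / 2 := by field_simp
    rw [← he]
    exact h2.congr_of_eventuallyEq (Filter.Eventually.of_forall fun u => by
      simp only [div_eq_mul_inv])
  have hd2 : HasDerivAt (fun u : ℝ => -(k / u) - u / 2) (k / v ^ 2 - 1 / 2) v := by
    have h2 : HasDerivAt (fun u : ℝ => -(k * u⁻¹) - u / 2) (-(k * -((v:ℝ)^2)⁻¹) - 1/2) v :=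
      ((hinv.const_mul k).neg).sub ((hasDerivAt_id v).div_const 2)
    have he : -(k * -((v:ℝ)^2)⁻¹) - 1/2 = k / v ^ 2 - 1 / 2 := by field_simp
    rw [← he]
    exact h2.congr_of_eventuallyEq (Filter.Eventually.of_forall fun u => by
      simp only [div_eq_mul_inv])
  have hΦ1 : HasDerivAt (fun u => stdNormalCDF (-(k / u) + u / 2))
      (gpdf (-(k / v) + v / 2) * (k / v ^ 2 + 1 / 2)) v :=
    (stdNormalCDF_hasDerivAt _).comp v hd1
  have hΦ2 : HasDerivAt (fun u => Real.exp k * stdNormalCDF (-(k / u) - u / 2))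
      (Real.exp k * (gpdf (-(k / v) - v / 2) * (k / v ^ 2 - 1 / 2))) v :=
    ((stdNormalCDF_hasDerivAt _).comp v hd2).const_mul _
  have h := hΦ1.sub hΦ2
  have heq : gpdf (-(k / v) + v / 2) * (k / v ^ 2 + 1 / 2)
      - Real.exp k * (gpdf (-(k / v) - v / 2) * (k / v ^ 2 - 1 / 2))
      = gpdf (-(k / v) + v / 2) := by
    rw [← mul_assoc, gpdf_ident k v hv.ne']
    ring
  rw [heq] at h
  exact h.congr_of_eventuallyEq (Filter.Eventually.of_forall fun u => rfl)

lemma vega_contOn {a b : ℝ} (ha : 0 < a) (hab : a ≤ b) (k : ℝ) :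
    IntervalIntegrable (fun u => gpdf (-(k / u) + u / 2)) volume a b := by
  apply ContinuousOn.intervalIntegrable
  apply gpdf_cont.comp_continuousOn
  rw [Set.uIcc_of_le hab]
  have hne : ∀ u ∈ Set.Icc a b, u ≠ 0 := fun u hu => (lt_of_lt_of_le ha hu.1).ne'
  exact ((continuousOn_const.div continuousOn_id hne).neg).add
    (continuousOn_id.div_const 2)

/-- FTC for CBS. -/
lemma CBS_sub_eq (k : ℝ) {a b : ℝ} (ha : 0 < a) (hab : a ≤ b) :
    CBS k b - CBS k a = ∫ u in a..b, gpdf (-(k / u) + u / 2) := by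
  refine intervalIntegral.integral_eq_sub_of_hasDerivAt (f := fun u => CBS k u) ?_
    (vega_contOn ha hab k) |>.symm
  intro u hu
  rw [Set.uIcc_of_le hab] at hu
  exact CBS_hasDerivAt k (lt_of_lt_of_le ha hu.1)

lemma CBS_mono (k : ℝ) {a b : ℝ} (ha : 0 < a) (hab : a ≤ b) : CBS k a ≤ CBS k b := by
  have h := CBS_sub_eq k ha hab
  have hnn : 0 ≤ ∫ u in a..b, gpdf (-(k / u) + u / 2) :=
    intervalIntegral.integral_nonneg hab (fun u _ => (gpdf_pos _).le)
  linarith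

/-- Lower bound for CBS. -/
lemma CBS_lower (k : ℝ) {v θ : ℝ} (hv : 0 < v) (hθ0 : 0 < θ) (hθ1 : θ < 1) (hk : 0 ≤ k) :
    (1 - θ) * v * gpdf (k / (θ * v) + v / 2) ≤ CBS k v := by
  have hθv : 0 < θ * v := mul_pos hθ0 hv
  have h0 : 0 ≤ CBS k (θ * v) := CBS_nonneg k _ hθv
  have hle : θ * v ≤ v := by nlinarith
  have hsub := CBS_sub_eq k hθv hle
  have hpt : ∀ u ∈ Set.Icc (θ*v) v, gpdf (k / (θ * v) + v / 2) ≤ gpdf (-(k / u) + u / 2) := by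
    intro u hu
    have hu1 : θ * v ≤ u := hu.1
    have hu2 : u ≤ v := hu.2
    have hupos : 0 < u := lt_of_lt_of_le hθv hu1
    have hkd : k / u ≤ k / (θ * v) := by
      apply div_le_div_of_nonneg_left hk hθv hu1
    have hkd0 : 0 ≤ k / u := div_nonneg hk hupos.le
    have hsq : (-(k / u) + u / 2)^2 ≤ (k / (θ * v) + v / 2)^2 := by
      apply sq_le_sq' <;> nlinarith
    unfold gpdf
    gcongr
  have hmono : ∫ u in (θ*v)..v, (fun _ => gpdf (k / (θ * v) + v / 2)) u
      ≤ ∫ u in (θ*v)..v, gpdf (-(k / u) + u / 2) := by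
    refine intervalIntegral.integral_mono_on hle intervalIntegrable_const (vega_contOn hθv hle k) ?_
    intro u hu
    exact hpt u hu
  rw [intervalIntegral.integral_const, smul_eq_mul] at hmono
  have : (1 - θ) * v * gpdf (k / (θ * v) + v / 2) = (v - θ*v) * gpdf (k / (θ * v) + v / 2) := by ring
  linarith

/-- Upper bound for CBS. -/
lemma CBS_upper (k v : ℝ) (hd1 : -(k / v) + v / 2 ≤ 0) :
    CBS k v ≤ Real.exp (-(-(k / v) + v / 2)^2 / 2) := by
  unfold CBS
  have h1 := stdNormalCDF_le_exp _ hd1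
  have h2 : 0 ≤ Real.exp k * stdNormalCDF (-(k / v) - v / 2) :=
    mul_nonneg (Real.exp_pos _).le (stdNormalCDF_nonneg _)
  linarith

lemma alg1 (x θ b νv st : ℝ) (hθ : θ ≠ 0) (hb : b ≠ 0) (hν : νv ≠ 0) (hst : st ≠ 0) :
    (νv*st)^2 * (x/νv/(θ*(b*st)) + b*st/2)^2
      = x^2/(θ^2*b^2) + (x/θ)*((νv*st)^2*(νv)⁻¹) + (b^2/4)*((νv*st)^2*st^2) := by
  field_simp
  ring

lemma alg2 (x a νv st : ℝ) (ha : a ≠ 0) (hν : νv ≠ 0) (hst : st ≠ 0) :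
    (νv*st)^2 * (-(x/νv/(a*st)) + a*st/2)^2
      = x^2/a^2 - x*((νv*st)^2*(νv)⁻¹) + (a^2/4)*((νv*st)^2*st^2) := by
  field_simp
  ring

/-- Transfer of large-deviations call-price asymptotics to implied volatility in
the log-modulated regime: if `γ_t log c(t) → -Λ_x` and `σ̂(t)` is the implied
volatility of `c(t)` at log-moneyness `x/ν_t`, then `σ̂(t) → x/√(2Λ_x)`. -/
theorem stmt_14 (H : ℝ) (hH : H ∈ Set.Ioo 0 (1 / 2))
    (L : ℝ → ℝ) (hLpos : ∀ t ∈ Set.Ioc (0:ℝ) 1, 0 < L t)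
    (γ ν : ℝ → ℝ)
    (hγdef : ∀ t ∈ Set.Ioc (0:ℝ) 1, γ t = t ^ (2 * H) * (L t) ^ 2)
    (hνdef : ∀ t ∈ Set.Ioc (0:ℝ) 1, ν t = t ^ (H - 1 / 2) * L t)
    (hγ0 : Tendsto γ (nhdsWithin 0 (Set.Ioc 0 1)) (𝓝 0))
    (hνinf : Tendsto ν (nhdsWithin 0 (Set.Ioc 0 1)) atTop)
    (hγlogν : Tendsto (fun t => γ t * Real.log (ν t)) (nhdsWithin 0 (Set.Ioc 0 1)) (𝓝 0))
    (hγlogt : Tendsto (fun t => γ t * Real.log t) (nhdsWithin 0 (Set.Ioc 0 1)) (𝓝 0))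
    (x Λx : ℝ) (hx : 0 < x) (hΛx : 0 < Λx)
    (t₀ : ℝ) (ht₀ : t₀ ∈ Set.Ioc (0:ℝ) 1)
    (c : ℝ → ℝ) (hc : ∀ t ∈ Set.Ioo (0:ℝ) t₀, c t ∈ Set.Ioo (0:ℝ) 1)
    (hclim : Tendsto (fun t => γ t * Real.log (c t)) (nhdsWithin 0 (Set.Ioo 0 t₀)) (𝓝 (-Λx)))
    (σhat : ℝ → ℝ) (hσpos : ∀ t ∈ Set.Ioo (0:ℝ) t₀, 0 < σhat t)
    (hBS : ∀ t ∈ Set.Ioo (0:ℝ) t₀, CBS (x / ν t) (σhat t * Real.sqrt t) = c t) :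
    Tendsto σhat (nhdsWithin 0 (Set.Ioo 0 t₀)) (𝓝 (x / Real.sqrt (2 * Λx))) := by
  have hsqΛpos : 0 < Real.sqrt (2 * Λx) := Real.sqrt_pos.2 (by positivity)
  have hSigpos : 0 < x / Real.sqrt (2 * Λx) := div_pos hx hsqΛpos
  have hsq2Λ : Real.sqrt (2 * Λx) ^ 2 = 2 * Λx := Real.sq_sqrt (by positivity)
  -- filter transfer
  have hmonoF : nhdsWithin (0:ℝ) (Set.Ioo 0 t₀) ≤ nhdsWithin 0 (Set.Ioc 0 1) :=
    nhdsWithin_mono 0 (fun t ht => ⟨ht.1, le_trans ht.2.le ht₀.2⟩)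
  have hγ0' := hγ0.mono_left hmonoF
  have hνinf' := hνinf.mono_left hmonoF
  have hγlogt' := hγlogt.mono_left hmonoF
  have h_id0 : Tendsto (fun t : ℝ => t) (nhdsWithin 0 (Set.Ioo 0 t₀)) (𝓝 0) :=
    tendsto_id.mono_right nhdsWithin_le_nhds
  have Tν : Tendsto (fun t => γ t * (ν t)⁻¹) (nhdsWithin 0 (Set.Ioo 0 t₀)) (𝓝 0) := by
    have := hγ0'.mul hνinf'.inv_tendsto_atTop
    simpa using this
  have Tt : Tendsto (fun t => γ t * t) (nhdsWithin 0 (Set.Ioo 0 t₀)) (𝓝 0) := by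
    simpa using hγ0'.mul h_id0
  have Tc : ∀ C : ℝ, Tendsto (fun t => γ t * C) (nhdsWithin 0 (Set.Ioo 0 t₀)) (𝓝 0) := by
    intro C; simpa using hγ0'.mul_const C
  -- pointwise facts
  have hfacts : ∀ t ∈ Set.Ioo (0:ℝ) t₀,
      0 < ν t ∧ 0 < γ t ∧ (ν t * Real.sqrt t) ^ 2 = γ t := by
    intro t ht
    have ht0 : 0 < t := ht.1
    have ht1 : t ≤ 1 := le_trans ht.2.le ht₀.2
    have htI : t ∈ Set.Ioc (0:ℝ) 1 := ⟨ht0, ht1⟩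
    have hL := hLpos t htI
    have hν : 0 < ν t := by
      rw [hνdef t htI]; exact mul_pos (Real.rpow_pos_of_pos ht0 _) hL
    have hγ : 0 < γ t := by
      rw [hγdef t htI]; exact mul_pos (Real.rpow_pos_of_pos ht0 _) (by positivity)
    refine ⟨hν, hγ, ?_⟩
    rw [hνdef t htI, hγdef t htI, mul_pow, mul_pow, Real.sq_sqrt ht0.le]
    have hA : (t ^ (H - 1/2) : ℝ) ^ 2 * t = t ^ (2*H : ℝ) := by
      rw [← Real.rpow_natCast (t ^ (H - 1/2)) 2, ← Real.rpow_mul ht0.le,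
        ← Real.rpow_add_one ht0.ne']
      congr 1
      push_cast
      ring
    linear_combination (L t)^2 * hA
  have hsqγ0 : Tendsto (fun t => Real.sqrt (γ t)) (nhdsWithin 0 (Set.Ioo 0 t₀)) (𝓝 0) := by
    have := (Real.continuous_sqrt.tendsto 0).comp hγ0'
    simpa [Function.comp_def] using this
  have hmeq : ∀ᶠ t in nhdsWithin (0:ℝ) (Set.Ioo 0 t₀), Real.sqrt (γ t) = ν t * Real.sqrt t := by
    filter_upwards [eventually_mem_nhdsWithin] with t ht
    obtain ⟨hν, hγ, hmsq⟩ := hfacts t ht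
    have hst : 0 < Real.sqrt t := Real.sqrt_pos.2 ht.1
    rw [← hmsq, Real.sqrt_sq (mul_pos hν hst).le]
  have hm0 : Tendsto (fun t => ν t * Real.sqrt t) (nhdsWithin 0 (Set.Ioo 0 t₀)) (𝓝 0) :=
    hsqγ0.congr' hmeq
  rw [tendsto_order]
  constructor
  · -- lower bound: ∀ a < Σ, eventually a < σhat t
    intro a ha
    rcases le_or_gt a 0 with ha0 | ha0
    · filter_upwards [eventually_mem_nhdsWithin] with t ht
      exact lt_of_le_of_lt ha0 (hσpos t ht)
    · -- 0 < a < Σ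
      have haΛ : Λx < x^2/(2*a^2) := by
        rw [lt_div_iff₀ (by positivity)]
        have h1 : a * Real.sqrt (2*Λx) < x := (lt_div_iff₀ hsqΛpos).1 ha
        nlinarith [hsqΛpos, mul_pos ha0 hsqΛpos]
      -- limit of the upper-bound exponent
      have hE2tend : Tendsto (fun t => -(x^2/(2*a^2)) + (x/2)*(γ t * (ν t)⁻¹) - (a^2/8)*(γ t * t))
          (nhdsWithin 0 (Set.Ioo 0 t₀)) (𝓝 (-(x^2/(2*a^2)))) := by
        have h := ((Tν.const_mul (x/2)).const_add (-(x^2/(2*a^2)))).sub (Tt.const_mul (a^2/8))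
        convert h using 2
        ring
      have hE2eq : ∀ᶠ t in nhdsWithin (0:ℝ) (Set.Ioo 0 t₀),
          -(x^2/(2*a^2)) + (x/2)*(γ t * (ν t)⁻¹) - (a^2/8)*(γ t * t)
            = γ t * (-(-(x / ν t / (a * Real.sqrt t)) + a * Real.sqrt t / 2)^2 / 2) := by
        filter_upwards [eventually_mem_nhdsWithin] with t ht
        obtain ⟨hν, hγ, hmsq⟩ := hfacts t ht
        have ht0 : 0 < t := ht.1
        have hst : 0 < Real.sqrt t := Real.sqrt_pos.2 ht0
        have e2 : γ t * t = (ν t * Real.sqrt t)^2 * (Real.sqrt t)^2 := by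
          rw [hmsq, Real.sq_sqrt ht0.le]
        have e1 : γ t * (ν t)⁻¹ = (ν t * Real.sqrt t)^2 * (ν t)⁻¹ := by rw [hmsq]
        have key := alg2 x a (ν t) (Real.sqrt t) ha0.ne' hν.ne' hst.ne'
        have e3 : γ t * (-(-(x / ν t / (a * Real.sqrt t)) + a * Real.sqrt t / 2)^2 / 2)
            = (ν t * Real.sqrt t)^2 * (-(-(x / ν t / (a * Real.sqrt t)) + a * Real.sqrt t / 2)^2 / 2) := by
          rw [hmsq]
        rw [e1, e2, e3]
        have hstne : Real.sqrt t ≠ 0 := hst.ne'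
        have hνne : ν t ≠ 0 := hν.ne'
        have hane : a ≠ 0 := ha0.ne'
        field_simp
        ring
      have hEtend' : Tendsto (fun t => γ t * (-(-(x / ν t / (a * Real.sqrt t)) + a * Real.sqrt t / 2)^2 / 2))
          (nhdsWithin 0 (Set.Ioo 0 t₀)) (𝓝 (-(x^2/(2*a^2)))) :=
        hE2tend.congr' hE2eq
      have hlt2 : ∀ᶠ t in nhdsWithin (0:ℝ) (Set.Ioo 0 t₀),
          γ t * (-(-(x / ν t / (a * Real.sqrt t)) + a * Real.sqrt t / 2)^2 / 2)
            < γ t * Real.log (c t) :=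
        hEtend'.eventually_lt hclim (by linarith)
      have hd1ev : ∀ᶠ t in nhdsWithin (0:ℝ) (Set.Ioo 0 t₀), ν t * Real.sqrt t < 2*x/a^2 :=
        hm0.eventually_lt tendsto_const_nhds (by positivity)
      filter_upwards [hlt2, hd1ev, eventually_mem_nhdsWithin] with t h1 h2 ht
      obtain ⟨hν, hγ, hmsq⟩ := hfacts t ht
      have ht0 : 0 < t := ht.1
      have ht1 : t ≤ 1 := le_trans ht.2.le ht₀.2
      have hst : 0 < Real.sqrt t := Real.sqrt_pos.2 ht0
      have hst1 : Real.sqrt t ≤ 1 := Real.sqrt_le_one.mpr ht1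
      have hc0 : 0 < c t := (hc t ht).1
      -- d1 ≤ 0
      have hd1 : -(x / ν t / (a * Real.sqrt t)) + a * Real.sqrt t / 2 ≤ 0 := by
        have hns : 0 < ν t * Real.sqrt t := mul_pos hν hst
        have key : a * Real.sqrt t / 2 * (ν t * (a * Real.sqrt t)) ≤ x := by
          have h3 : Real.sqrt t * (ν t * Real.sqrt t) ≤ ν t * Real.sqrt t := by
            nlinarith
          have h5 : Real.sqrt t * (ν t * Real.sqrt t) < 2*x/a^2 := lt_of_le_of_lt h3 h2
          have h6 : a^2/2 * (Real.sqrt t * (ν t * Real.sqrt t)) ≤ a^2/2 * (2*x/a^2) :=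
            mul_le_mul_of_nonneg_left h5.le (by positivity)
          have h7 : a^2/2 * (2*x/a^2) = x := by field_simp
          linarith [h6, h7]
        have h4 : a * Real.sqrt t / 2 ≤ x / (ν t * (a * Real.sqrt t)) :=
          (le_div_iff₀ (mul_pos hν (mul_pos ha0 hst))).2 key
        rw [div_div]
        linarith
      have hub := CBS_upper (x / ν t) (a * Real.sqrt t) hd1
      have hlogc : -(-(x / ν t / (a * Real.sqrt t)) + a * Real.sqrt t / 2)^2 / 2 < Real.log (c t) := by
        have := (mul_lt_mul_iff_right₀ hγ).1 h1
        linarith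
      have hexplt : Real.exp (-(-(x / ν t / (a * Real.sqrt t)) + a * Real.sqrt t / 2)^2 / 2) < c t := by
        calc Real.exp (-(-(x / ν t / (a * Real.sqrt t)) + a * Real.sqrt t / 2)^2 / 2)
            < Real.exp (Real.log (c t)) := Real.exp_lt_exp.2 hlogc
          _ = c t := Real.exp_log hc0
      have hBSt := hBS t ht
      by_contra hcon
      push_neg at hcon
      have hmle : σhat t * Real.sqrt t ≤ a * Real.sqrt t :=
        mul_le_mul_of_nonneg_right hcon hst.le
      have := CBS_mono (x / ν t) (mul_pos (hσpos t ht) hst) hmle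
      linarith [hub, hexplt, hBSt ▸ this]
  · -- upper bound: ∀ b > Σ, eventually σhat t < b
    intro b hb
    have hb0 : 0 < b := hSigpos.trans hb
    have hAΛ : x^2/(2*b^2) < Λx := by
      rw [div_lt_iff₀ (by positivity)]
      have h1 : x < b * Real.sqrt (2*Λx) := (div_lt_iff₀ hsqΛpos).1 hb
      nlinarith [hsqΛpos]
    set θ := Real.sqrt ((x^2/(2*b^2) + Λx)/(2*Λx)) with hθdef
    have hθsq : θ^2 = (x^2/(2*b^2) + Λx)/(2*Λx) := Real.sq_sqrt (by positivity)
    have hθ0 : 0 < θ := Real.sqrt_pos.2 (by positivity)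
    have hθ1 : θ < 1 := by
      have h1 : θ^2 < 1 := by
        rw [hθsq, div_lt_one (by positivity)]
        linarith
      nlinarith
    have hA' : x^2/(2*θ^2*b^2) < Λx := by
      rw [div_lt_iff₀ (by positivity), hθsq]
      have hx2 : x^2 < Λx * (2*b^2) := by
        rw [div_lt_iff₀ (by positivity)] at hAΛ
        linarith
      rw [show Λx * (2*((x^2/(2*b^2) + Λx)/(2*Λx))*b^2) = (x^2/(2*b^2) + Λx)*b^2 by
        field_simp]
      have : x^2/(2*b^2)*b^2 = x^2/2 := by field_simp
      nlinarith
    have hEtend : Tendsto (fun t => γ t * (Real.log (1-θ) + Real.log b)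
        + (1/2)*(γ t * Real.log t) - γ t * Real.log (Real.sqrt (2*Real.pi))
        - (x^2/(2*θ^2*b^2) + ((x/(2*θ))*(γ t * (ν t)⁻¹) + (b^2/8)*(γ t * t))))
        (nhdsWithin 0 (Set.Ioo 0 t₀)) (𝓝 (-(x^2/(2*θ^2*b^2)))) := by
      have hP := ((Tc (Real.log (1-θ) + Real.log b)).add (hγlogt'.const_mul (1/2))).sub
        (Tc (Real.log (Real.sqrt (2*Real.pi))))
      have hQ := ((Tν.const_mul (x/(2*θ))).add (Tt.const_mul (b^2/8))).const_add (x^2/(2*θ^2*b^2))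
      have h := hP.sub hQ
      convert h using 2
      ring
    have hEq : ∀ᶠ t in nhdsWithin (0:ℝ) (Set.Ioo 0 t₀),
        γ t * (Real.log (1-θ) + Real.log b)
        + (1/2)*(γ t * Real.log t) - γ t * Real.log (Real.sqrt (2*Real.pi))
        - (x^2/(2*θ^2*b^2) + ((x/(2*θ))*(γ t * (ν t)⁻¹) + (b^2/8)*(γ t * t)))
        = γ t * Real.log ((1-θ) * (b*Real.sqrt t)
            * gpdf (x / ν t / (θ*(b*Real.sqrt t)) + b*Real.sqrt t/2)) := by
      filter_upwards [eventually_mem_nhdsWithin] with t ht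
      obtain ⟨hν, hγ, hmsq⟩ := hfacts t ht
      have ht0 : 0 < t := ht.1
      have hst : 0 < Real.sqrt t := Real.sqrt_pos.2 ht0
      have h1θ : 0 < 1 - θ := by linarith
      have hbst : 0 < b * Real.sqrt t := mul_pos hb0 hst
      have hgp : 0 < gpdf (x / ν t / (θ*(b*Real.sqrt t)) + b*Real.sqrt t/2) := gpdf_pos _
      have e2 : γ t * t = (ν t * Real.sqrt t)^2 * (Real.sqrt t)^2 := by
        rw [hmsq, Real.sq_sqrt ht0.le]
      have e1 : γ t * (ν t)⁻¹ = (ν t * Real.sqrt t)^2 * (ν t)⁻¹ := by rw [hmsq]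
      have key := alg1 x θ b (ν t) (Real.sqrt t) hθ0.ne' hb0.ne' hν.ne' hst.ne'
      have hwsq : γ t * (x / ν t / (θ*(b*Real.sqrt t)) + b*Real.sqrt t/2)^2
          = x^2/(θ^2*b^2) + (x/θ)*(γ t * (ν t)⁻¹) + (b^2/4)*(γ t * t) := by
        have e3 : γ t * (x / ν t / (θ*(b*Real.sqrt t)) + b*Real.sqrt t/2)^2
            = (ν t * Real.sqrt t)^2 * (x / ν t / (θ*(b*Real.sqrt t)) + b*Real.sqrt t/2)^2 := by
          rw [hmsq]
        rw [e1, e2, e3]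
        linear_combination key
      have hlogW : Real.log (gpdf (x / ν t / (θ*(b*Real.sqrt t)) + b*Real.sqrt t/2))
          = -((x / ν t / (θ*(b*Real.sqrt t)) + b*Real.sqrt t/2)^2)/2
            - Real.log (Real.sqrt (2*Real.pi)) := by
        unfold gpdf
        rw [Real.log_div (Real.exp_ne_zero _)
          (by positivity : (0:ℝ) < Real.sqrt (2*Real.pi)).ne', Real.log_exp]
      have hlogLB : Real.log ((1-θ) * (b*Real.sqrt t)
          * gpdf (x / ν t / (θ*(b*Real.sqrt t)) + b*Real.sqrt t/2))
          = Real.log (1-θ) + (Real.log b + Real.log t / 2)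
            + Real.log (gpdf (x / ν t / (θ*(b*Real.sqrt t)) + b*Real.sqrt t/2)) := by
        rw [Real.log_mul (by positivity) hgp.ne', Real.log_mul h1θ.ne' hbst.ne',
          Real.log_mul hb0.ne' hst.ne', Real.log_sqrt ht0.le]
      rw [hlogLB, hlogW]
      linear_combination ((1:ℝ)/2) * hwsq
    have hLBtend : Tendsto (fun t => γ t * Real.log ((1-θ) * (b*Real.sqrt t)
        * gpdf (x / ν t / (θ*(b*Real.sqrt t)) + b*Real.sqrt t/2)))
        (nhdsWithin 0 (Set.Ioo 0 t₀)) (𝓝 (-(x^2/(2*θ^2*b^2)))) :=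
      hEtend.congr' hEq
    have hlt : ∀ᶠ t in nhdsWithin (0:ℝ) (Set.Ioo 0 t₀),
        γ t * Real.log (c t) < γ t * Real.log ((1-θ) * (b*Real.sqrt t)
          * gpdf (x / ν t / (θ*(b*Real.sqrt t)) + b*Real.sqrt t/2)) :=
      hclim.eventually_lt hLBtend (by linarith)
    filter_upwards [hlt, eventually_mem_nhdsWithin] with t h1 ht
    obtain ⟨hν, hγ, hmsq⟩ := hfacts t ht
    have ht0 : 0 < t := ht.1
    have hst : 0 < Real.sqrt t := Real.sqrt_pos.2 ht0
    have h1θ : 0 < 1 - θ := by linarith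
    have hbst : 0 < b * Real.sqrt t := mul_pos hb0 hst
    have hc0 : 0 < c t := (hc t ht).1
    have hk : 0 < x / ν t := div_pos hx hν
    have hgp : 0 < gpdf (x / ν t / (θ*(b*Real.sqrt t)) + b*Real.sqrt t/2) := gpdf_pos _
    have hLBpos : 0 < (1-θ) * (b*Real.sqrt t)
        * gpdf (x / ν t / (θ*(b*Real.sqrt t)) + b*Real.sqrt t/2) :=
      mul_pos (mul_pos h1θ hbst) hgp
    have hloglt : Real.log (c t) < Real.log ((1-θ) * (b*Real.sqrt t)
        * gpdf (x / ν t / (θ*(b*Real.sqrt t)) + b*Real.sqrt t/2)) :=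
      (mul_lt_mul_iff_right₀ hγ).1 h1
    have hclt : c t < (1-θ) * (b*Real.sqrt t)
        * gpdf (x / ν t / (θ*(b*Real.sqrt t)) + b*Real.sqrt t/2) :=
      (Real.log_lt_log_iff hc0 hLBpos).1 hloglt
    have hle := CBS_lower (x / ν t) hbst hθ0 hθ1 hk.le
    have hBSt := hBS t ht
    by_contra hcon
    push_neg at hcon
    have hmle : b * Real.sqrt t ≤ σhat t * Real.sqrt t :=
      mul_le_mul_of_nonneg_right hcon hst.le
    have hmono := CBS_mono (x / ν t) hbst hmle
    linarith [hmono, hle, hclt, hBSt ▸ hmono]
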